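/- For any partition p of Fin n (n ≥ 1), there exists a partition q of Fin n with p ⊥ q. Consequently, for every partition p the set {p}⊥ is nonempty. -/
import Mathlib


/-- A multigraph with vertex type `V` and edge-index type `E`:
each edge has an ordered pair of endpoints. -/
structure Multigraph (V : Type*) (E : Type*) where
  ends : E → V × V

namespace Multigraph

variable {V E : Type*}

/-- A walk in a multigraph, traversing edges in either direction. -/
inductive Walk (G : Multigraph V E) : V → V → Type _
  | nil (v : V) : Walk G v v
  | cons {u v w : V} (e : E)
      (h : G.ends e = (u, v) ∨ G.ends e = (v, u)) (p : Walk G v w) : Walk G u w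

/-- The list of edges used by a walk. -/
def Walk.edges {G : Multigraph V E} : ∀ {u v : V}, G.Walk u v → List E
  | _, _, .nil _ => []
  | _, _, .cons e _ p => e :: p.edges

/-- A multigraph is connected if any two vertices are joined by a walk. -/
def Connected (G : Multigraph V E) : Prop := ∀ u v : V, Nonempty (G.Walk u v)

/-- A multigraph is acyclic if it has no closed trail of positive length
(equivalently, no cycle). -/
def Acyclic (G : Multigraph V E) : Prop :=
  ∀ (v : V) (w : G.Walk v v), w.edges.Nodup → w.edges = []

/-- A multigraph is a tree if it is acyclic and connected. -/
def IsTree (G : Multigraph V E) : Prop := G.Acyclic ∧ G.Connected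

end Multigraph

/-- The meeting graph of two partitions (setoids) of `Fin n`: vertices are
the blocks of `p` together with the blocks of `q`, and for each `i : Fin n`
there is one edge joining the `p`-block of `i` to the `q`-block of `i`. -/
def meetingGraph {n : ℕ} (p q : Setoid (Fin n)) :
    Multigraph (Quotient p ⊕ Quotient q) (Fin n) :=
  ⟨fun i => (Sum.inl (Quotient.mk p i), Sum.inr (Quotient.mk q i))⟩

/-- Two partitions are orthogonal when their meeting graph is a tree
(acyclic and connected). -/
def Orthogonal {n : ℕ} (p q : Setoid (Fin n)) : Prop :=
  (meetingGraph p q).IsTree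

/-- The number of blocks of a partition. -/
noncomputable def numBlocks {n : ℕ} (p : Setoid (Fin n)) : ℕ := Nat.card (Quotient p)

/-- The dual `P⊥` of a set of partitions. -/
def orthSet {n : ℕ} (P : Set (Setoid (Fin n))) : Set (Setoid (Fin n)) :=
  {q | ∀ p ∈ P, Orthogonal q p}

/- ### Auxiliary walk API -/

namespace Multigraph

variable {V E : Type*} {G : Multigraph V E}

def Walk.append : ∀ {u v w : V}, G.Walk u v → G.Walk v w → G.Walk u w
  | _, _, _, Walk.nil _, q => q
  | _, _, _, Walk.cons e h p, q => Walk.cons e h (p.append q)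

theorem Walk.edges_append : ∀ {u v w : V} (p : G.Walk u v) (q : G.Walk v w),
    (p.append q).edges = p.edges ++ q.edges
  | _, _, _, Walk.nil _, _ => rfl
  | _, _, _, Walk.cons e h p, q => by
    simp only [Walk.append, Walk.edges, Walk.edges_append p q, List.cons_append]

def Walk.reverse : ∀ {u v : V}, G.Walk u v → G.Walk v u
  | _, _, Walk.nil v => Walk.nil v
  | _, _, Walk.cons e h p => p.reverse.append (Walk.cons e h.symm (Walk.nil _))

theorem Walk.edges_reverse : ∀ {u v : V} (p : G.Walk u v),
    p.reverse.edges = p.edges.reverse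
  | _, _, Walk.nil _ => rfl
  | _, _, Walk.cons e h p => by
    simp [Walk.reverse, Walk.edges_append, Walk.edges, Walk.edges_reverse p]

end Multigraph

namespace OrthProof

open Multigraph

variable {n : ℕ}

/-- `g p x` is `none` if `x` is the chosen representative of its `p`-block,
and `some x` otherwise. -/
noncomputable def g (p : Setoid (Fin n)) (x : Fin n) : Option (Fin n) :=
  if (Quotient.mk p x).out = x then none else some x

/-- The orthogonal partition: one block consisting of all representatives,
singletons elsewhere. -/
noncomputable def q (p : Setoid (Fin n)) : Setoid (Fin n) := Setoid.ker (g p)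

lemma g_none {p : Setoid (Fin n)} {x : Fin n} :
    g p x = none ↔ (Quotient.mk p x).out = x := by
  unfold g; split_ifs with h <;> simp [h]

lemma g_cases (p : Setoid (Fin n)) (x : Fin n) : g p x = none ∨ g p x = some x := by
  unfold g; split_ifs <;> simp

lemma mkq_eq {p : Setoid (Fin n)} {x y : Fin n} :
    Quotient.mk (q p) x = Quotient.mk (q p) y ↔ g p x = g p y := by
  rw [Quotient.eq]; exact Iff.rfl

lemma g_out (p : Setoid (Fin n)) (C : Quotient p) : g p C.out = none := by
  rw [g_none, Quotient.out_eq]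

/-- If edge `e` is incident to `Sum.inl C` (as the walk source), identify things. -/
lemma incident_inl {p q' : Setoid (Fin n)} {e : Fin n} {C : Quotient p}
    {v : Quotient p ⊕ Quotient q'}
    (h : (meetingGraph p q').ends e = (Sum.inl C, v) ∨
         (meetingGraph p q').ends e = (v, Sum.inl C)) :
    Quotient.mk p e = C ∧ v = Sum.inr (Quotient.mk q' e) := by
  rcases h with h | h
  · obtain ⟨h1, h2⟩ := Prod.mk.inj h
    exact ⟨Sum.inl.inj h1, h2.symm⟩
  · obtain ⟨h1, h2⟩ := Prod.mk.inj h
    exact absurd h2 (by simp)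

lemma incident_inr {p q' : Setoid (Fin n)} {e : Fin n} {D : Quotient q'}
    {v : Quotient p ⊕ Quotient q'}
    (h : (meetingGraph p q').ends e = (Sum.inr D, v) ∨
         (meetingGraph p q').ends e = (v, Sum.inr D)) :
    Quotient.mk q' e = D ∧ v = Sum.inl (Quotient.mk p e) := by
  rcases h with h | h
  · obtain ⟨h1, h2⟩ := Prod.mk.inj h
    exact absurd h1 (by simp)
  · obtain ⟨h1, h2⟩ := Prod.mk.inj h
    exact ⟨Sum.inr.inj h2, h1.symm⟩

/-- Any walk leaving a singleton block starts with its unique incident edge. -/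
lemma singleton_first {p : Setoid (Fin n)} {x : Fin n} (hx : g p x = some x)
    {t : Quotient p ⊕ Quotient (q p)}
    (w : (meetingGraph p (q p)).Walk (Sum.inr (Quotient.mk (q p) x)) t)
    (ht : t ≠ Sum.inr (Quotient.mk (q p) x)) : x ∈ w.edges := by
  cases w with
  | nil => exact absurd rfl ht
  | cons e h w' =>
    obtain ⟨he, hv⟩ := incident_inr h
    have hge : g p e = g p x := mkq_eq.mp he
    have : e = x := by
      rcases g_cases p e with h0 | h0 <;> rw [h0, hx] at hge
      · cases hge
      · exact Option.some.inj hge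
    simp [Walk.edges, this]

/-- Key lemma: any walk ending at the root block must use, from an
`inl C` source, the edge `C.out`; from a singleton source `x`, it starts
with `x` and then contains `(mk p x).out`. -/
lemma walk_to_root {p : Setoid (Fin n)} {r : Fin n} (hr : g p r = none) :
    ∀ (m : ℕ) (a : Quotient p ⊕ Quotient (q p))
      (w : (meetingGraph p (q p)).Walk a (Sum.inr (Quotient.mk (q p) r))),
      w.edges.length ≤ m →
      (∀ C : Quotient p, a = Sum.inl C → C.out ∈ w.edges) ∧
      (∀ x : Fin n, g p x = some x → a = Sum.inr (Quotient.mk (q p) x) →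
        ∃ l, w.edges = x :: l ∧ (Quotient.mk p x).out ∈ l) := by
  intro m
  induction m with
  | zero =>
    intro a w hw
    constructor
    · intro C hC
      cases w with
      | nil => simp at hC
      | cons e h w' => simp [Walk.edges] at hw
    · intro x hx hX
      cases w with
      | nil =>
        have : g p r = g p x := mkq_eq.mp (Sum.inr.inj hX)
        rw [hr, hx] at this; cases this
      | cons e h w' => simp [Walk.edges] at hw
  | succ m ih =>
    intro a w hw
    constructor
    · intro C hC
      subst hC
      cases w with
      | cons e h w' =>
        obtain ⟨he, hv⟩ := incident_inl h
        subst hv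
        rcases g_cases p e with h0 | h0
        · have : C.out = e := by rw [← he]; exact g_none.mp h0
          simp [Walk.edges, this]
        · have hlen : w'.edges.length ≤ m := by
            simp [Walk.edges] at hw; omega
          obtain ⟨l, hl, hmem⟩ := (ih _ w' hlen).2 e h0 rfl
          have : (Quotient.mk p e).out ∈ w'.edges := by rw [hl]; exact List.mem_cons_of_mem _ hmem
          rw [he] at this
          simp [Walk.edges, this]
    · intro x hx hX
      cases w with
      | nil =>
        have : g p r = g p x := mkq_eq.mp (Sum.inr.inj hX)
        rw [hr, hx] at this; cases this
      | cons e h w' =>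
        rw [hX] at h
        obtain ⟨he, hv⟩ := incident_inr h
        subst hv
        have hge : g p e = g p x := mkq_eq.mp he
        have hex : e = x := by
          rcases g_cases p e with h0 | h0 <;> rw [h0, hx] at hge
          · cases hge
          · exact Option.some.inj hge
        subst hex
        have hlen : w'.edges.length ≤ m := by
          simp [Walk.edges] at hw; omega
        have := (ih _ w' hlen).1 (Quotient.mk p e) rfl
        exact ⟨w'.edges, rfl, this⟩

/-- Transport a walk in `meetingGraph p q'` to one in `meetingGraph q' p`. -/
def swapWalk (p q' : Setoid (Fin n)) :
    ∀ {a b : Quotient p ⊕ Quotient q'}, (meetingGraph p q').Walk a b →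
      (meetingGraph q' p).Walk a.swap b.swap
  | _, _, Walk.nil v => Walk.nil v.swap
  | _, _, Walk.cons e h w =>
      Walk.cons e
        (by
          rcases h with h | h
          · obtain ⟨h1, h2⟩ := Prod.mk.inj h
            rw [← h1, ← h2]
            exact Or.inr rfl
          · obtain ⟨h1, h2⟩ := Prod.mk.inj h
            rw [← h1, ← h2]
            exact Or.inl rfl)
        (swapWalk p q' w)

lemma edges_swapWalk (p q' : Setoid (Fin n)) :
    ∀ {a b : Quotient p ⊕ Quotient q'} (w : (meetingGraph p q').Walk a b),
      (swapWalk p q' w).edges = w.edges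
  | _, _, Walk.nil _ => rfl
  | _, _, Walk.cons e h w => by
    simp [swapWalk, Walk.edges, edges_swapWalk p q' w]

lemma orth_symm {p q' : Setoid (Fin n)} (h : Orthogonal p q') : Orthogonal q' p := by
  obtain ⟨hac, hconn⟩ := h
  constructor
  · intro v w hw
    have h2 := hac v.swap (swapWalk q' p w) (by rwa [edges_swapWalk])
    rwa [edges_swapWalk] at h2
  · intro u v
    obtain ⟨w⟩ := hconn u.swap v.swap
    have h2 := swapWalk p q' w
    rw [Sum.swap_swap, Sum.swap_swap] at h2
    exact ⟨h2⟩

lemma main (p : Setoid (Fin n)) (hn : 1 ≤ n) : Orthogonal p (q p) := by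
  set r : Fin n := (Quotient.mk p ⟨0, hn⟩).out with hrdef
  have hr : g p r = none := g_out p _
  set root : Quotient p ⊕ Quotient (q p) := Sum.inr (Quotient.mk (q p) r) with hroot
  -- walks to the root
  have toRootL : ∀ C : Quotient p, Nonempty ((meetingGraph p (q p)).Walk (Sum.inl C) root) := by
    intro C
    refine ⟨Walk.cons C.out (Or.inl ?_) (Walk.nil root)⟩
    show (Sum.inl (Quotient.mk p C.out), Sum.inr (Quotient.mk (q p) C.out))
        = (Sum.inl C, root)
    rw [hroot]
    have h1 : Quotient.mk p C.out = C := Quotient.out_eq C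
    have h2 : Quotient.mk (q p) C.out = Quotient.mk (q p) r := by
      rw [mkq_eq, g_out, hr]
    rw [h1, h2]
  have toRoot : ∀ a, Nonempty ((meetingGraph p (q p)).Walk a root) := by
    intro a
    rcases a with C | D
    · exact toRootL C
    · obtain ⟨x, rfl⟩ := Quotient.exists_rep D
      obtain ⟨w⟩ := toRootL (Quotient.mk p x)
      exact ⟨Walk.cons x (Or.inr rfl) w⟩
  constructor
  · -- acyclic
    intro v w hnd
    cases w with
    | nil => rfl
    | cons e h w' =>
      exfalso
      have hnotmem : e ∉ w'.edges := by
        simp [Walk.edges] at hnd; exact hnd.1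
      rcases h with h | h
      · obtain ⟨h1, h2⟩ := Prod.mk.inj h
        -- v = inl (mk p e), next = inr (mk q e), w' : Walk (inr (mk q e)) v
        subst h1; subst h2
        rcases g_cases p e with h0 | h0
        · have := (walk_to_root h0 w'.reverse.edges.length _ w'.reverse le_rfl).1
            (Quotient.mk p e) rfl
          rw [Walk.edges_reverse, List.mem_reverse] at this
          have heq : (Quotient.mk p e).out = e := g_none.mp h0
          rw [heq] at this
          exact hnotmem this
        · have := singleton_first h0 w' (by simp)
          exact hnotmem this
      · obtain ⟨h1, h2⟩ := Prod.mk.inj h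
        -- v = inr (mk q e), w' : Walk (inl (mk p e)) v
        subst h1; subst h2
        rcases g_cases p e with h0 | h0
        · have := (walk_to_root h0 w'.edges.length _ w' le_rfl).1 (Quotient.mk p e) rfl
          have heq : (Quotient.mk p e).out = e := g_none.mp h0
          rw [heq] at this
          exact hnotmem this
        · have := singleton_first h0 w'.reverse (by simp)
          rw [Walk.edges_reverse, List.mem_reverse] at this
          exact hnotmem this
  · -- connected
    intro u v
    obtain ⟨w1⟩ := toRoot u
    obtain ⟨w2⟩ := toRoot v
    exact ⟨w1.append w2.reverse⟩

end OrthProof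

/-- every partition of `Fin n` (`n ≥ 1`) admits an orthogonal
partition; consequently `{p}⊥` is nonempty for every partition `p`. -/
theorem exists_orthogonal {n : ℕ} (hn : 1 ≤ n) :
    (∀ p : Setoid (Fin n), ∃ q : Setoid (Fin n), Orthogonal p q) ∧
      ∀ p : Setoid (Fin n), (orthSet {p}).Nonempty := by
  constructor
  · exact fun p => ⟨OrthProof.q p, OrthProof.main p hn⟩
  · intro p
    refine ⟨OrthProof.q p, ?_⟩
    intro p' hp'
    rcases hp' with rfl
    exact OrthProof.orth_symm (OrthProof.main p' hn)
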